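/- Suppose G and H are finitely generated groups with fixed word lengths |·|_G and |·|_H, that (X,μ,T) is a G-system, and that σ : G × X → H is a measurable cocycle over T which is integrable, i.e. ∫_X |σ(g,x)|_H μ(dx) < ∞ for every g ∈ G. Then for every g ∈ G and every ε > 0 there exists δ > 0 such that for every measurable U ⊆ X: if μ(U) < δ then H_μ(σ(g,·); U) < ε. -/

import Mathlib

open MeasureTheory
open scoped ENNReal

/-- The word length of `g` with respect to the generating set `S`. -/
noncomputable def wordLength {G : Type*} [Group G] (S : Set G) (g : G) : ℕ :=
  sInf {n | ∃ l : List G, l.length = n ∧ (∀ s ∈ l, s ∈ S) ∧ l.prod = g}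

/-- Shannon entropy of a measurable set: `H_μ(U) = -μ(U) log μ(U) - μ(X\U) log μ(X\U)`. -/
noncomputable def setEntropy {X : Type*} [MeasurableSpace X] (μ : Measure X) (U : Set X) :
    ℝ≥0∞ :=
  ENNReal.ofReal (Real.negMulLog (μ U).toReal + Real.negMulLog (μ Uᶜ).toReal)

/-- Shannon entropy of an observable: `H_μ(φ) = Σ_h -μ(φ = h) log μ(φ = h)`. -/
noncomputable def obsEntropy {X H : Type*} [MeasurableSpace X] (μ : Measure X) (φ : X → H) :
    ℝ≥0∞ :=
  ∑' h : H, ENNReal.ofReal (Real.negMulLog ((μ (φ ⁻¹' {h})).toReal))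

/-- Shannon entropy of the partial observable `(φ, U)`:
`H_μ(φ; U) = H_μ(U) + μ(U) · H_{μ|U}(φ)`.  (When `μ U = 0` this is `0`.) -/
noncomputable def partialObsEntropy {X H : Type*} [MeasurableSpace X] (μ : Measure X)
    (φ : X → H) (U : Set X) : ℝ≥0∞ :=
  setEntropy μ U + μ U * obsEntropy (ProbabilityTheory.cond μ U) φ

/-- Gibbs-type pointwise inequality: `-p log p ≤ p log (1/q) + q`. -/
lemma gibbs_aux {p q : ℝ} (hp : 0 ≤ p) (hq : 0 < q) :
    Real.negMulLog p ≤ p * Real.log q⁻¹ + q := by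
  rcases eq_or_lt_of_le hp with h | hp'
  · simp [← h, Real.negMulLog, hq.le]
  · have h1 : Real.log (q / p) ≤ q / p - 1 := Real.log_le_sub_one_of_pos (by positivity)
    have key : Real.negMulLog p = p * Real.log (q / p) + p * Real.log q⁻¹ := by
      rw [Real.negMulLog, Real.log_div hq.ne' hp'.ne', Real.log_inv]; ring
    have h2 : p * Real.log (q / p) ≤ q - p := by
      calc p * Real.log (q / p) ≤ p * (q / p - 1) :=
            mul_le_mul_of_nonneg_left h1 hp'.le
        _ = q - p := by field_simp
    rw [key]; linarith

/-- Lebesgue integral of a function factoring through a countable type. -/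
lemma lintegral_comp_countable'' {X H : Type*} [MeasurableSpace X] [Countable H]
    (ν : Measure X) (φ : X → H) (hφ : ∀ h, MeasurableSet (φ ⁻¹' {h})) (f : H → ℝ≥0∞) :
    ∫⁻ x, f (φ x) ∂ν = ∑' h, f h * ν (φ ⁻¹' {h}) := by
  have hpt : ∀ x, f (φ x) = ∑' h : H, (φ ⁻¹' {h}).indicator (fun _ => f h) x := by
    intro x
    rw [tsum_eq_single (φ x) ?_]
    · simp
    · intro h hne
      exact Set.indicator_of_notMem (by simpa using (Ne.symm hne)) _
  calc ∫⁻ x, f (φ x) ∂ν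
      = ∫⁻ x, ∑' h : H, (φ ⁻¹' {h}).indicator (fun _ => f h) x ∂ν := by
        exact lintegral_congr hpt
    _ = ∑' h, ∫⁻ x, (φ ⁻¹' {h}).indicator (fun _ => f h) x ∂ν :=
        lintegral_tsum fun h => ((measurable_const).indicator (hφ h)).aemeasurable
    _ = ∑' h, f h * ν (φ ⁻¹' {h}) := by
        refine tsum_congr fun h => ?_
        rw [lintegral_indicator (hφ h), setLIntegral_const]

/-- Every element has a word of minimal length. -/
lemma wordLength_spec {H : Type*} [Group H] (SH : Set H)
    (hSHsym : ∀ s ∈ SH, s⁻¹ ∈ SH) (hSHgen : Subgroup.closure SH = ⊤) (h : H) :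
    ∃ l : List H, l.length = wordLength SH h ∧ (∀ s ∈ l, s ∈ SH) ∧ l.prod = h := by
  have hmem : h ∈ (Subgroup.closure SH).toSubmonoid := by
    rw [hSHgen]; trivial
  rw [Subgroup.closure_toSubmonoid] at hmem
  obtain ⟨l, hl, hprod⟩ := Submonoid.exists_list_of_mem_closure hmem
  have hl' : ∀ s ∈ l, s ∈ SH := by
    intro s hs
    rcases hl s hs with h1 | h1
    · exact h1
    · have := hSHsym _ (Set.mem_inv.mp h1)
      rwa [inv_inv] at this
  have hne : wordLength SH h ∈
      {n | ∃ l : List H, l.length = n ∧ (∀ s ∈ l, s ∈ SH) ∧ l.prod = h} :=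
    Nat.sInf_mem ⟨l.length, l, rfl, hl', hprod⟩
  exact hne

/-- The sum of `r^|h|` over a group generated by a finite symmetric set, with
`r = (2(card+1))⁻¹`, is at most 2. -/
lemma tsum_pow_wordLength_le {H : Type*} [Group H] (SH : Set H) [Fintype ↥SH]
    (hSHsym : ∀ s ∈ SH, s⁻¹ ∈ SH) (hSHgen : Subgroup.closure SH = ⊤) :
    ∑' h : H, (((2 * (Fintype.card ↥SH + 1) : ℕ) : ℝ≥0∞))⁻¹ ^ wordLength SH h ≤ 2 := by
  classical
  set c : ℕ := Fintype.card ↥SH with hc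
  set r : ℝ≥0∞ := (((2 * (c + 1) : ℕ) : ℝ≥0∞))⁻¹ with hrdef
  choose w hwlen hwmem hwprod using wordLength_spec SH hSHsym hSHgen
  let W : H → List ↥SH := fun h => (w h).attachWith (· ∈ SH) (hwmem h)
  have hWlen : ∀ h, (W h).length = wordLength SH h := by
    intro h
    simp only [W, List.length_attachWith]
    exact hwlen h
  have hWinj : Function.Injective W := by
    intro a b hab
    have hmap : (W a).map Subtype.val = (W b).map Subtype.val := by rw [hab]
    simp only [W, List.attachWith_map_subtype_val] at hmap
    rw [← hwprod a, ← hwprod b, hmap]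
  have hcr : (c : ℝ≥0∞) * r ≤ 2⁻¹ := by
    have hne0 : ((2 * (c + 1) : ℕ) : ℝ≥0∞) ≠ 0 := by
      simp
    have hnetop : ((2 * (c + 1) : ℕ) : ℝ≥0∞) ≠ ∞ := ENNReal.natCast_ne_top _
    rw [hrdef, ← div_eq_mul_inv, ENNReal.div_le_iff hne0 hnetop]
    push_cast
    rw [← mul_assoc, ENNReal.inv_mul_cancel two_ne_zero ENNReal.ofNat_ne_top, one_mul]
    exact le_self_add
  have step1 : ∑' h : H, r ^ wordLength SH h ≤ ∑' l : List ↥SH, r ^ l.length := by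
    calc ∑' h : H, r ^ wordLength SH h
        = ∑' h : H, (fun l : List ↥SH => r ^ l.length) (W h) := by
          refine tsum_congr fun h => ?_
          simp [hWlen h]
      _ ≤ ∑' l : List ↥SH, r ^ l.length :=
          ENNReal.tsum_comp_le_tsum_of_injective hWinj _
  have step2 : ∑' l : List ↥SH, r ^ l.length = ∑' n : ℕ, ((c : ℝ≥0∞) * r) ^ n := by
    rw [← (List.equivSigmaTuple (α := ↥SH)).symm.tsum_eq (fun l : List ↥SH => r ^ l.length)]
    rw [ENNReal.tsum_sigma']
    refine tsum_congr fun n => ?_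
    have : ∀ f : Fin n → ↥SH,
        r ^ ((List.equivSigmaTuple (α := ↥SH)).symm ⟨n, f⟩).length = r ^ n := by
      intro f
      simp [List.equivSigmaTuple]
    rw [tsum_congr this, tsum_fintype, Finset.sum_const, Finset.card_univ]
    rw [Fintype.card_fun, Fintype.card_fin, nsmul_eq_mul, mul_pow]
    push_cast
    ring
  have step3 : ∑' n : ℕ, ((c : ℝ≥0∞) * r) ^ n ≤ 2 := by
    rw [ENNReal.tsum_geometric]
    have h1 : (2 : ℝ≥0∞)⁻¹ ≤ 1 - (c : ℝ≥0∞) * r := by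
      have := tsub_le_tsub_left hcr (1 : ℝ≥0∞)
      rwa [ENNReal.one_sub_inv_two] at this
    calc (1 - (c : ℝ≥0∞) * r)⁻¹ ≤ (2⁻¹ : ℝ≥0∞)⁻¹ := ENNReal.inv_le_inv.mpr h1
      _ = 2 := by simp
  exact step1.trans (step2.le.trans step3)

theorem stmt2 {G H X : Type*} [Group G] [Group H]
    [MeasurableSpace X] [StandardBorelSpace X]
    (SG : Set G) (hSGfin : SG.Finite) (hSGsym : ∀ s ∈ SG, s⁻¹ ∈ SG)
    (hSGgen : Subgroup.closure SG = ⊤)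
    (SH : Set H) (hSHfin : SH.Finite) (hSHsym : ∀ s ∈ SH, s⁻¹ ∈ SH)
    (hSHgen : Subgroup.closure SH = ⊤)
    (μ : Measure X) [IsProbabilityMeasure μ]
    (T : G → X → X) (hT1 : T 1 = id) (hTmul : ∀ g k : G, T (g * k) = T g ∘ T k)
    (hTmp : ∀ g : G, MeasurePreserving (T g) μ μ)
    (σ : G → X → H)
    (hσmeas : ∀ (g : G) (h : H), MeasurableSet {x : X | σ g x = h})
    (hσcoc : ∀ (g k : G) (x : X), σ (g * k) x = σ g (T k x) * σ k x)
    (hσint : ∀ g : G, (∫⁻ x, (wordLength SH (σ g x) : ℝ≥0∞) ∂μ) ≠ ∞)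
    (g : G) {ε : ℝ} (hε : 0 < ε) :
    ∃ δ : ℝ, 0 < δ ∧ ∀ U : Set X, MeasurableSet U → μ U < ENNReal.ofReal δ →
      partialObsEntropy μ (σ g) U < ENNReal.ofReal ε := by
  classical
  haveI : Fintype ↥SH := hSHfin.fintype
  haveI hHcount : Countable H := by
    haveI : Countable ↥SH := hSHfin.countable.to_subtype
    choose w hwlen hwmem hwprod using wordLength_spec SH hSHsym hSHgen
    have hWinj : Function.Injective
        (fun h => (w h).attachWith (· ∈ SH) (hwmem h) : H → List ↥SH) := by
      intro a b hab
      have hab' : (w a).attachWith (· ∈ SH) (hwmem a)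
          = (w b).attachWith (· ∈ SH) (hwmem b) := hab
      have hmap := congrArg (List.map Subtype.val) hab'
      simp only [List.attachWith_map_subtype_val] at hmap
      rw [← hwprod a, ← hwprod b, hmap]
    exact hWinj.countable
  set φ : X → H := σ g with hφdef
  have hfib : ∀ h : H, MeasurableSet (φ ⁻¹' {h}) := by
    intro h
    exact hσmeas g h
  set c : ℕ := Fintype.card ↥SH with hc
  set r : ℝ≥0∞ := (((2 * (c + 1) : ℕ) : ℝ≥0∞))⁻¹ with hrdef
  set C : ℝ := Real.log ((2 * (c + 1) : ℕ) : ℝ) with hCdef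
  have hbase1 : (1 : ℝ) < ((2 * (c + 1) : ℕ) : ℝ) := by
    have : (2 : ℕ) ≤ 2 * (c + 1) := by nlinarith
    exact_mod_cast lt_of_lt_of_le (by norm_num) this
  have hC : 0 < C := Real.log_pos hbase1
  set Lc : ℝ≥0∞ := ENNReal.ofReal C with hLc
  have hLc0 : Lc ≠ 0 := (ENNReal.ofReal_pos.mpr hC).ne'
  have hLctop : Lc ≠ ∞ := ENNReal.ofReal_ne_top
  set ψ : X → ℝ≥0∞ := fun x => (wordLength SH (φ x) : ℝ≥0∞) with hψdef
  have hψint : (∫⁻ x, ψ x ∂μ) ≠ ∞ := hσint g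
  -- key entropy bound for probability measures
  have hobs : ∀ ν : Measure X, IsProbabilityMeasure ν →
      obsEntropy ν φ ≤ Lc * (∫⁻ x, ψ x ∂ν) + 2 := by
    intro ν hν
    have hterm : ∀ h : H,
        ENNReal.ofReal (Real.negMulLog ((ν (φ ⁻¹' {h})).toReal))
          ≤ ((wordLength SH h : ℝ≥0∞) * ν (φ ⁻¹' {h})) * Lc + r ^ wordLength SH h := by
      intro h
      set n := wordLength SH h with hn
      set p := (ν (φ ⁻¹' {h})).toReal with hp
      have hp0 : 0 ≤ p := ENNReal.toReal_nonneg
      set q : ℝ := (((2 * (c + 1) : ℕ) : ℝ))⁻¹ ^ n with hq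
      have hbase0 : (0:ℝ) < ((2 * (c + 1) : ℕ) : ℝ) := lt_trans one_pos hbase1
      have hq0 : 0 < q := by positivity
      have h1 := gibbs_aux hp0 hq0
      have hlogq : Real.log q⁻¹ = (n : ℝ) * C := by
        rw [hq, ← inv_pow, inv_inv, Real.log_pow, hCdef]
      rw [hlogq] at h1
      calc ENNReal.ofReal (Real.negMulLog p)
          ≤ ENNReal.ofReal (p * ((n:ℝ) * C) + q) := ENNReal.ofReal_le_ofReal h1
        _ ≤ ENNReal.ofReal (p * ((n:ℝ) * C)) + ENNReal.ofReal q := ENNReal.ofReal_add_le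
        _ = ((n : ℝ≥0∞) * ν (φ ⁻¹' {h})) * Lc + r ^ n := by
            congr 1
            · rw [ENNReal.ofReal_mul hp0, ENNReal.ofReal_mul (Nat.cast_nonneg n),
                ENNReal.ofReal_natCast, hp, ENNReal.ofReal_toReal (measure_ne_top ν _), hLc]
              ring
            · rw [hq, ENNReal.ofReal_pow (by positivity),
                ENNReal.ofReal_inv_of_pos hbase0, ENNReal.ofReal_natCast, hrdef]
    have hsum2 : ∑' h : H, r ^ wordLength SH h ≤ 2 :=
      tsum_pow_wordLength_le SH hSHsym hSHgen
    have hint : ∑' h : H, (wordLength SH h : ℝ≥0∞) * ν (φ ⁻¹' {h}) = ∫⁻ x, ψ x ∂ν :=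
      (lintegral_comp_countable'' ν φ hfib (fun h => (wordLength SH h : ℝ≥0∞))).symm
    calc obsEntropy ν φ
        ≤ ∑' h : H, (((wordLength SH h : ℝ≥0∞) * ν (φ ⁻¹' {h})) * Lc + r ^ wordLength SH h) :=
          ENNReal.tsum_le_tsum hterm
      _ = (∑' h : H, (wordLength SH h : ℝ≥0∞) * ν (φ ⁻¹' {h})) * Lc
            + ∑' h : H, r ^ wordLength SH h := by
          rw [ENNReal.tsum_add, ENNReal.tsum_mul_right]
      _ ≤ (∫⁻ x, ψ x ∂ν) * Lc + 2 := add_le_add (le_of_eq (by rw [hint])) hsum2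
      _ = Lc * (∫⁻ x, ψ x ∂ν) + 2 := by rw [mul_comm]
  -- choose δ₁ from continuity of set entropy
  have hcont : ContinuousAt (fun t : ℝ => Real.negMulLog t + Real.negMulLog (1 - t)) 0 :=
    (Real.continuous_negMulLog.add
      (Real.continuous_negMulLog.comp (continuous_const.sub continuous_id))).continuousAt
  obtain ⟨δ₁, hδ₁pos, hδ₁⟩ := Metric.continuousAt_iff.mp hcont (ε/4) (by linarith)
  -- choose δ₂ from absolute continuity of the integral
  have hε4 : ENNReal.ofReal (ε/4) ≠ 0 := by
    rw [Ne, ENNReal.ofReal_eq_zero, not_le]; linarith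
  have hε' : ENNReal.ofReal (ε/4) * Lc⁻¹ ≠ 0 :=
    mul_ne_zero hε4 (ENNReal.inv_ne_zero.mpr hLctop)
  obtain ⟨δ₂, hδ₂pos, hδ₂⟩ := exists_pos_setLIntegral_lt_of_measure_lt hψint hε'
  set δ₂' : ℝ := (min δ₂ 1).toReal with hδ₂'def
  have hmin_ne_top : min δ₂ 1 ≠ ∞ :=
    (lt_of_le_of_lt (min_le_right _ _) ENNReal.one_lt_top).ne
  have hmin_ne0 : min δ₂ 1 ≠ 0 := (lt_min hδ₂pos zero_lt_one).ne'
  have h2pos : 0 < δ₂' := ENNReal.toReal_pos hmin_ne0 hmin_ne_top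
  have h2le : ENNReal.ofReal δ₂' ≤ δ₂ := by
    rw [hδ₂'def, ENNReal.ofReal_toReal hmin_ne_top]; exact min_le_left _ _
  refine ⟨min δ₁ (min δ₂' (ε/8)), by positivity, ?_⟩
  intro U hU hUδ
  have hUtop : μ U ≠ ∞ := measure_ne_top μ U
  have hUδ₁ : μ U < ENNReal.ofReal δ₁ :=
    lt_of_lt_of_le hUδ (ENNReal.ofReal_le_ofReal (min_le_left _ _))
  have hUδ₂ : μ U < δ₂ :=
    lt_of_lt_of_le hUδ (le_trans
      (ENNReal.ofReal_le_ofReal (le_trans (min_le_right _ _) (min_le_left _ _))) h2le)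
  have hUδ₈ : μ U < ENNReal.ofReal (ε/8) :=
    lt_of_lt_of_le hUδ (ENNReal.ofReal_le_ofReal
      (le_trans (min_le_right _ _) (min_le_right _ _)))
  set t : ℝ := (μ U).toReal with ht
  have htlt : t < δ₁ := (ENNReal.lt_ofReal_iff_toReal_lt hUtop).mp hUδ₁
  -- set entropy bound
  have hμcompl : μ Uᶜ = 1 - μ U := by
    rw [measure_compl hU hUtop, measure_univ]
  have h1t : (μ Uᶜ).toReal = 1 - t := by
    rw [hμcompl, ENNReal.toReal_sub_of_le prob_le_one ENNReal.one_ne_top, ENNReal.toReal_one]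
  have hsetE : setEntropy μ U ≤ ENNReal.ofReal (ε/4) := by
    rw [setEntropy, h1t]
    apply ENNReal.ofReal_le_ofReal
    have hdist : dist t 0 < δ₁ := by
      rw [Real.dist_eq, sub_zero, abs_of_nonneg ENNReal.toReal_nonneg]
      exact htlt
    have := hδ₁ hdist
    simp only [Real.dist_eq, sub_zero, Real.negMulLog_zero, Real.negMulLog_one, add_zero] at this
    exact le_of_lt (lt_of_le_of_lt (le_abs_self _) this)
  -- second term bound
  have hterm2 : μ U * obsEntropy (ProbabilityTheory.cond μ U) φ
      ≤ ENNReal.ofReal (ε/4) + ENNReal.ofReal (ε/4) := by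
    rcases eq_or_ne (μ U) 0 with h0 | h0
    · simp [h0]
    · haveI hprob : IsProbabilityMeasure (ProbabilityTheory.cond μ U) :=
        ProbabilityTheory.cond_isProbabilityMeasure h0
      have hb := hobs (ProbabilityTheory.cond μ U) hprob
      have hcond : μ U * (∫⁻ x, ψ x ∂(ProbabilityTheory.cond μ U)) = ∫⁻ x in U, ψ x ∂μ := by
        rw [ProbabilityTheory.cond, lintegral_smul_measure, smul_eq_mul, ← mul_assoc,
          ENNReal.mul_inv_cancel h0 hUtop, one_mul]
      calc μ U * obsEntropy (ProbabilityTheory.cond μ U) φ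
          ≤ μ U * (Lc * (∫⁻ x, ψ x ∂(ProbabilityTheory.cond μ U)) + 2) := mul_le_mul_right hb _
        _ = Lc * (∫⁻ x in U, ψ x ∂μ) + 2 * μ U := by
            rw [mul_add, ← hcond]; ring
        _ ≤ ENNReal.ofReal (ε/4) + ENNReal.ofReal (ε/4) := by
            refine add_le_add ?_ ?_
            · have hI := hδ₂ U hUδ₂
              calc Lc * (∫⁻ x in U, ψ x ∂μ)
                  ≤ Lc * (ENNReal.ofReal (ε/4) * Lc⁻¹) := mul_le_mul_right hI.le _
                _ = ENNReal.ofReal (ε/4) := by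
                    rw [mul_comm (ENNReal.ofReal (ε/4)) _, ← mul_assoc,
                      ENNReal.mul_inv_cancel hLc0 hLctop, one_mul]
            · calc (2:ℝ≥0∞) * μ U ≤ 2 * ENNReal.ofReal (ε/8) := mul_le_mul_right hUδ₈.le _
                _ = ENNReal.ofReal (ε/4) := by
                    rw [show ((2:ℝ≥0∞)) = ENNReal.ofReal 2 by simp,
                      ← ENNReal.ofReal_mul (by norm_num)]
                    congr 1
                    ring
  calc partialObsEntropy μ φ U
      = setEntropy μ U + μ U * obsEntropy (ProbabilityTheory.cond μ U) φ := rfl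
    _ ≤ ENNReal.ofReal (ε/4) + (ENNReal.ofReal (ε/4) + ENNReal.ofReal (ε/4)) :=
        add_le_add hsetE hterm2
    _ = ENNReal.ofReal (ε/4 + (ε/4 + ε/4)) := by
        rw [ENNReal.ofReal_add (by linarith) (by linarith),
          ENNReal.ofReal_add (by linarith) (by linarith)]
    _ < ENNReal.ofReal ε := by
        rw [ENNReal.ofReal_lt_ofReal_iff hε]; linarith
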